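/- Let J : W₂ → W₂ be a self-adjoint linear involution (J† = J and J ∘ J = id). Set d̄₁ := J ∘ d₁, 𝔹̄ := {e ∈ W₂ : d̄₁†(e) ∈ V₁}, and let Δ̄ be the persistent sheaf Laplacian built from d̄₁ and dᵗ. Then 𝔹̄ = J(𝔹) and Δ̄ = Δ. (Case III of the paper's proposition that the spectra of persistent sheaf Laplacians do not depend on the orientation: alternating the orientation of a (q+1)-cell of X_{t+p}.) -/

import Mathlib

noncomputable section

open LinearMap RealInnerProductSpace

variable {W₀ W₁ W₂ : Type*}
  [NormedAddCommGroup W₀] [InnerProductSpace ℝ W₀] [FiniteDimensional ℝ W₀]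
  [NormedAddCommGroup W₁] [InnerProductSpace ℝ W₁] [FiniteDimensional ℝ W₁]
  [NormedAddCommGroup W₂] [InnerProductSpace ℝ W₂] [FiniteDimensional ℝ W₂]

/-- The compressed map `dᵗ : V₀ → V₁`, namely `π ∘ d₀` restricted to `V₀`, where
`π` is the orthogonal projection of `W₁` onto `V₁`. -/
def compressedMap (d₀ : W₀ →ₗ[ℝ] W₁) (V₀ : Submodule ℝ W₀) (V₁ : Submodule ℝ W₁) :
    V₀ →ₗ[ℝ] V₁ :=
  (V₁.orthogonalProjectionOnto).toLinearMap ∘ₗ d₀ ∘ₗ V₀.subtype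

/-- The subspace `𝔹 = {e ∈ W₂ : d₁†(e) ∈ V₁}` of `W₂`. -/
def sheafB (d₁ : W₁ →ₗ[ℝ] W₂) (V₁ : Submodule ℝ W₁) : Submodule ℝ W₂ :=
  V₁.comap (LinearMap.adjoint d₁)

/-- The map `L : 𝔹 → V₁` obtained by restricting `d₁†` to `𝔹`. -/
def sheafL (d₁ : W₁ →ₗ[ℝ] W₂) (V₁ : Submodule ℝ W₁) : sheafB d₁ V₁ →ₗ[ℝ] V₁ :=
  (LinearMap.adjoint d₁).restrict (fun _ hx => hx)

/-- The persistent sheaf Laplacian `Δ = L ∘ L† + dt ∘ dt† : V₁ → V₁`, built from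
`d₁` (via `L`, the restriction of `d₁†` to `𝔹`) and a compressed map `dt`. -/
def PSL {V₀ : Submodule ℝ W₀} (d₁ : W₁ →ₗ[ℝ] W₂) (V₁ : Submodule ℝ W₁)
    (dt : V₀ →ₗ[ℝ] V₁) : V₁ →ₗ[ℝ] V₁ :=
  sheafL d₁ V₁ ∘ₗ LinearMap.adjoint (sheafL d₁ V₁) + dt ∘ₗ LinearMap.adjoint dt

/-- Case III of orientation independence: if `J : W₂ → W₂` is a
self-adjoint involution, then for `d̄₁ = J ∘ d₁` one has `𝔹̄ = J(𝔹)` and the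
persistent sheaf Laplacian built from `d̄₁` and `dᵗ` equals `Δ`. -/
theorem PSL_postcomp_involution (d₀ : W₀ →ₗ[ℝ] W₁) (d₁ : W₁ →ₗ[ℝ] W₂)
    (V₀ : Submodule ℝ W₀) (V₁ : Submodule ℝ W₁)
    (J : W₂ →ₗ[ℝ] W₂)
    (hJa : LinearMap.adjoint J = J)
    (hJi : J ∘ₗ J = LinearMap.id) :
    sheafB (J ∘ₗ d₁) V₁ = (sheafB d₁ V₁).map J ∧
      PSL (J ∘ₗ d₁) V₁ (compressedMap d₀ V₀ V₁) =
        PSL d₁ V₁ (compressedMap d₀ V₀ V₁) := by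
  have hJJ : ∀ x : W₂, J (J x) = x := fun x => congrArg (fun f => f x) hJi
  have hadj : LinearMap.adjoint (J ∘ₗ d₁) = LinearMap.adjoint d₁ ∘ₗ J := by
    rw [LinearMap.adjoint_comp, hJa]
  -- membership characterizations
  have hmemB : ∀ x : W₂, x ∈ sheafB d₁ V₁ ↔ LinearMap.adjoint d₁ x ∈ V₁ := fun x => Iff.rfl
  have hmemB' : ∀ x : W₂, x ∈ sheafB (J ∘ₗ d₁) V₁ ↔ LinearMap.adjoint d₁ (J x) ∈ V₁ := by
    intro x
    rw [sheafB, Submodule.mem_comap, hadj]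
    rfl
  have hBeq : sheafB (J ∘ₗ d₁) V₁ = (sheafB d₁ V₁).map J := by
    ext x
    rw [hmemB', Submodule.mem_map]
    constructor
    · intro hx
      exact ⟨J x, hx, hJJ x⟩
    · rintro ⟨y, hy, rfl⟩
      rwa [hJJ]
  refine ⟨hBeq, ?_⟩
  -- the maps U : 𝔹̄ → 𝔹 and Uinv : 𝔹 → 𝔹̄ induced by J
  have hU : ∀ x ∈ sheafB (J ∘ₗ d₁) V₁, J x ∈ sheafB d₁ V₁ := by
    intro x hx; exact (hmemB' x).1 hx
  have hUinv : ∀ x ∈ sheafB d₁ V₁, J x ∈ sheafB (J ∘ₗ d₁) V₁ := by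
    intro x hx; rw [hmemB', hJJ]; exact hx
  set U : sheafB (J ∘ₗ d₁) V₁ →ₗ[ℝ] sheafB d₁ V₁ := J.restrict hU with hUdef
  set Ui : sheafB d₁ V₁ →ₗ[ℝ] sheafB (J ∘ₗ d₁) V₁ := J.restrict hUinv with hUidef
  have hJinner : ∀ a b : W₂, (inner ℝ (J a) b : ℝ) = inner ℝ a (J b) := by
    intro a b
    conv_lhs => rw [← hJa]
    exact LinearMap.adjoint_inner_left J b a
  have hUadj : LinearMap.adjoint U = Ui := by
    symm
    rw [LinearMap.eq_adjoint_iff]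
    intro x y
    exact hJinner (x : W₂) (y : W₂)
  have hUUi : U ∘ₗ Ui = LinearMap.id := by
    ext x
    show J (J (x : W₂)) = (x : W₂)
    exact hJJ _
  have hLbar : sheafL (J ∘ₗ d₁) V₁ = sheafL d₁ V₁ ∘ₗ U := by
    ext x
    show ((LinearMap.adjoint (J ∘ₗ d₁)) (x : W₂) : W₁) = (LinearMap.adjoint d₁) (J (x : W₂))
    rw [hadj]; rfl
  have key : sheafL (J ∘ₗ d₁) V₁ ∘ₗ LinearMap.adjoint (sheafL (J ∘ₗ d₁) V₁) =
      sheafL d₁ V₁ ∘ₗ LinearMap.adjoint (sheafL d₁ V₁) := by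
    rw [hLbar, LinearMap.adjoint_comp, hUadj, ← LinearMap.comp_assoc,
      LinearMap.comp_assoc Ui U (sheafL d₁ V₁), hUUi, LinearMap.comp_id]
  rw [PSL, PSL, key]
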